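/- Let E be a finite-dimensional real inner product space and L : E → ℝ a differentiable function with finite infimum L* := inf L. Suppose L is ℓ-smooth, i.e., L(z′) ≤ L(z) + ⟨∇L(z), z′ − z⟩ + (ℓ/2)‖z′ − z‖² for all z, z′ ∈ E, and μ-PL, i.e., ‖∇L(z)‖² ≥ 2μ(L(z) − L*) for all z ∈ E, where ℓ, μ > 0. Then for every z ∈ E, every δ ∈ E, and every step size α with 0 < α ≤ 1/ℓ: L(z − α(∇L(z) + δ)) − L* ≤ (1 − αμ)(L(z) − L*) + (α/2)‖δ‖². -/

import Mathlib

/-- **One-step contraction of inexact gradient descent under smoothness and PL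
(core descent estimate in the proof of Theorem 1).**
If `L` is `ℓ`-smooth and `μ`-PL with finite infimum `L* = ⨅ L`, then for every point `z`,
bias vector `δ`, and step size `0 < α ≤ 1/ℓ`,
`L(z - α(∇L(z) + δ)) - L* ≤ (1 - αμ)(L(z) - L*) + (α/2)‖δ‖²`. -/
theorem stmt_11 {E : Type*} [NormedAddCommGroup E] [InnerProductSpace ℝ E]
    [FiniteDimensional ℝ E]
    (L : E → ℝ) (L' : E → E) (hgrad : ∀ z, HasGradientAt L (L' z) z)
    (hbdd : BddBelow (Set.range L))
    (ℓ μ : ℝ) (hℓ : 0 < ℓ) (hμ : 0 < μ)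
    (hsmooth : ∀ z z' : E,
      L z' ≤ L z + inner ℝ (L' z) (z' - z) + ℓ / 2 * ‖z' - z‖ ^ 2)
    (hPL : ∀ z : E, 2 * μ * (L z - ⨅ w : E, L w) ≤ ‖L' z‖ ^ 2) :
    ∀ (z δ : E) (α : ℝ), 0 < α → α ≤ 1 / ℓ →
      L (z - α • (L' z + δ)) - (⨅ w : E, L w) ≤
        (1 - α * μ) * (L z - ⨅ w : E, L w) + α / 2 * ‖δ‖ ^ 2 := by
  intro z δ α hα hαℓ
  set g := L' z with hg
  set Lstar := (⨅ w : E, L w) with hL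
  set z' := z - α • (g + δ) with hz'
  have hdiff : z' - z = (-α) • (g + δ) := by
    rw [hz']; module
  have h1 : L z' ≤ L z + inner ℝ g (z' - z) + ℓ / 2 * ‖z' - z‖ ^ 2 := hsmooth z z'
  have hinner : (inner ℝ g (z' - z) : ℝ) = -α * (‖g‖ ^ 2 + inner ℝ g δ) := by
    rw [hdiff, real_inner_smul_right, inner_add_right, real_inner_self_eq_norm_sq]
  have hnorm : ‖z' - z‖ ^ 2 = α ^ 2 * ‖g + δ‖ ^ 2 := by
    rw [hdiff, norm_smul]
    simp [abs_of_pos hα]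
    ring
  have hexp : ‖g + δ‖ ^ 2 = ‖g‖ ^ 2 + 2 * inner ℝ g δ + ‖δ‖ ^ 2 := by
    rw [← real_inner_self_eq_norm_sq, inner_add_add_self, real_inner_self_eq_norm_sq,
      real_inner_self_eq_norm_sq, real_inner_comm δ g]
    ring
  have hαℓ' : ℓ * α ≤ 1 := by
    rw [le_div_iff₀ hℓ] at hαℓ; linarith
  have h2 : ℓ / 2 * ‖z' - z‖ ^ 2 ≤ α / 2 * ‖g + δ‖ ^ 2 := by
    rw [hnorm]
    have : ℓ / 2 * (α ^ 2 * ‖g + δ‖ ^ 2) = (ℓ * α) * (α / 2 * ‖g + δ‖ ^ 2) := by ring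
    rw [this]
    nlinarith [sq_nonneg ‖g + δ‖, sq_nonneg α]
  have h1' : L z' ≤ L z + (-α * (‖g‖ ^ 2 + inner ℝ g δ)) + α / 2 * ‖g + δ‖ ^ 2 := by
    rw [← hinner]; linarith
  have h3 : L z' ≤ L z - α / 2 * ‖g‖ ^ 2 + α / 2 * ‖δ‖ ^ 2 := by
    rw [hexp] at h1'; linarith
  have hPLz := hPL z
  have : α / 2 * (2 * μ * (L z - Lstar)) ≤ α / 2 * ‖g‖ ^ 2 :=
    mul_le_mul_of_nonneg_left hPLz (by positivity)
  linarith
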